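/- Let a be a positive definite Hermitian 2×2 complex matrix with A = det a > 0 and 𝔸 = A + (Im a₁₂)². For every (y, μ) ∈ ℝ² × ℝ with ϱ = √((A/𝔸)Qℝ(y) + Aμ²) > 0, the integral ∫_{ℝ²} ( Q(x₁ + iy₁, x₂ + iy₂) + Aμ² )^{−3/2} dx₁ dx₂ converges and equals 2π/(√𝔸 · ϱ). -/

import Mathlib

open MeasureTheory

/-- The Hermitian form `Q(w) = a₁₁|w₁|² + a₂₂|w₂|² + 2Re(a₁₂ w₁ conj(w₂))`. -/
noncomputable def Qh (a11 a22 : ℝ) (a12 w1 w2 : ℂ) : ℝ :=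
  a11 * Complex.normSq w1 + a22 * Complex.normSq w2 + 2 * (a12 * w1 * (starRingEnd ℂ) w2).re

/-- The real quadratic form `Qℝ(y) = a₁₁y₁² + 2Re(a₁₂)y₁y₂ + a₂₂y₂²`. -/
noncomputable def QR (a11 a22 : ℝ) (a12 : ℂ) (y1 y2 : ℝ) : ℝ :=
  a11 * y1 ^ 2 + 2 * a12.re * y1 * y2 + a22 * y2 ^ 2


open Real Filter


lemma aux_tendsto_top : Tendsto (fun t : ℝ => t / Real.sqrt (1 + t^2)) atTop (nhds 1) := by
  have h1 : Tendsto (fun t : ℝ => 1 + t^2) atTop atTop :=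
    tendsto_atTop_add_const_left _ 1 (tendsto_pow_atTop (by norm_num))
  have h2 : Tendsto (fun t : ℝ => (1 + t^2)⁻¹) atTop (nhds 0) := h1.inv_tendsto_atTop
  have h4 : Tendsto (fun t : ℝ => 1 - (1 + t^2)⁻¹) atTop (nhds 1) := by
    simpa using tendsto_const_nhds.sub h2
  have h3 : Tendsto (fun t : ℝ => Real.sqrt (1 - (1 + t^2)⁻¹)) atTop (nhds 1) := by
    have := (Real.continuous_sqrt.tendsto 1).comp h4
    rw [Real.sqrt_one] at this; exact this
  refine h3.congr' ?_
  filter_upwards [eventually_ge_atTop (0:ℝ)] with t ht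
  have hpos : (0:ℝ) < 1 + t^2 := by positivity
  have : 1 - (1 + t^2)⁻¹ = t^2 / (1 + t^2) := by field_simp; ring
  rw [this, Real.sqrt_div (sq_nonneg t), Real.sqrt_sq ht]

lemma aux_tendsto_bot : Tendsto (fun t : ℝ => t / Real.sqrt (1 + t^2)) atBot (nhds (-1)) := by
  have h := (aux_tendsto_top.comp tendsto_neg_atBot_atTop).neg
  simp only [Function.comp] at h
  refine h.congr (fun t => ?_)
  rw [neg_sq]
  ring

lemma aux_hasDeriv (t : ℝ) :
    HasDerivAt (fun t : ℝ => t / Real.sqrt (1 + t^2)) ((1 + t^2) ^ (-(3:ℝ)/2)) t := by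
  have h0 : (0:ℝ) < 1 + t^2 := by positivity
  have hspos : 0 < Real.sqrt (1 + t^2) := Real.sqrt_pos.mpr h0
  have hin : HasDerivAt (fun t : ℝ => 1 + t^2) (2*t) t := by
    simpa using ((hasDerivAt_pow 2 t).const_add 1)
  have hsq : HasDerivAt (fun t : ℝ => Real.sqrt (1 + t^2))
      (1 / (2 * Real.sqrt (1 + t^2)) * (2*t)) t :=
    (Real.hasDerivAt_sqrt h0.ne').comp t hin
  have hdiv := (hasDerivAt_id t).div hsq hspos.ne'
  convert hdiv using 1
  · rfl
  · rfl
  · rfl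
  set s := Real.sqrt (1 + t^2) with hsdef
  have hs2 : s^2 = 1 + t^2 := Real.sq_sqrt h0.le
  have : (1 + t^2) ^ (-(3:ℝ)/2) = (s^3)⁻¹ := by
    rw [← hs2, ← Real.rpow_natCast s 2, ← Real.rpow_mul hspos.le, ← Real.rpow_natCast s 3,
      ← Real.rpow_neg hspos.le]
    norm_num
  rw [this]
  field_simp
  simp only [id_eq]
  linear_combination (-1:ℝ) * hs2


lemma aux_intg_one : Integrable (fun t : ℝ => (1 + t^2) ^ (-(3:ℝ)/2)) := by
  have h := integrable_rpow_neg_one_add_norm_sq (E := ℝ) (μ := volume) (r := 3)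
    (by simp [Module.finrank_self])
  simpa [Real.norm_eq_abs, sq_abs, neg_div] using h


lemma aux_int_one : ∫ t : ℝ, (1 + t^2) ^ (-(3:ℝ)/2) = 2 := by
  have h := integral_of_hasDerivAt_of_tendsto aux_hasDeriv aux_intg_one aux_tendsto_bot
    aux_tendsto_top
  rw [h]; norm_num

lemma aux_intg_c {c : ℝ} (hc : 0 < c) :
    Integrable (fun u : ℝ => (u^2 + c) ^ (-(3:ℝ)/2)) := by
  have hs : Real.sqrt c ≠ 0 := (Real.sqrt_pos.mpr hc).ne'
  refine (integrable_comp_mul_left_iff (fun u : ℝ => (u^2 + c) ^ (-(3:ℝ)/2)) hs).mp ?_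
  have : (fun x : ℝ => ((Real.sqrt c * x)^2 + c) ^ (-(3:ℝ)/2))
      = fun x : ℝ => c ^ (-(3:ℝ)/2) * (1 + x^2) ^ (-(3:ℝ)/2) := by
    funext x
    rw [mul_pow, Real.sq_sqrt hc.le, show c * x^2 + c = c * (1 + x^2) by ring,
      Real.mul_rpow hc.le (by positivity)]
  rw [this]
  exact aux_intg_one.const_mul _

lemma aux_int_c {c : ℝ} (hc : 0 < c) :
    ∫ u : ℝ, (u^2 + c) ^ (-(3:ℝ)/2) = 2 / c := by
  have hs : (0:ℝ) < Real.sqrt c := Real.sqrt_pos.mpr hc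
  have h := MeasureTheory.Measure.integral_comp_mul_left
    (fun u : ℝ => (u^2 + c) ^ (-(3:ℝ)/2)) (Real.sqrt c)
  have hl : (∫ x : ℝ, ((Real.sqrt c * x)^2 + c) ^ (-(3:ℝ)/2)) = c ^ (-(3:ℝ)/2) * 2 := by
    have : (fun x : ℝ => ((Real.sqrt c * x)^2 + c) ^ (-(3:ℝ)/2))
        = fun x : ℝ => c ^ (-(3:ℝ)/2) * (1 + x^2) ^ (-(3:ℝ)/2) := by
      funext x
      rw [mul_pow, Real.sq_sqrt hc.le, show c * x^2 + c = c * (1 + x^2) by ring,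
        Real.mul_rpow hc.le (by positivity)]
    rw [this, integral_const_mul, aux_int_one]
  rw [hl] at h
  have habs : |(Real.sqrt c)⁻¹| = (Real.sqrt c)⁻¹ := abs_of_pos (by positivity)
  rw [habs, smul_eq_mul] at h
  have : (∫ u : ℝ, (u^2 + c) ^ (-(3:ℝ)/2)) = Real.sqrt c * (c ^ (-(3:ℝ)/2) * 2) := by
    rw [h, ← mul_assoc, mul_inv_cancel₀ hs.ne', one_mul]
  rw [this, Real.sqrt_eq_rpow, ← mul_assoc, ← Real.rpow_add hc]
  norm_num
  rw [Real.rpow_neg_one]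
  ring

lemma aux_intg_inv_c {c : ℝ} (hc : 0 < c) :
    Integrable (fun u : ℝ => (u^2 + c)⁻¹) := by
  have hs : Real.sqrt c ≠ 0 := (Real.sqrt_pos.mpr hc).ne'
  refine (integrable_comp_mul_left_iff (fun u : ℝ => (u^2 + c)⁻¹) hs).mp ?_
  have : (fun x : ℝ => ((Real.sqrt c * x)^2 + c)⁻¹) = fun x : ℝ => c⁻¹ * (1 + x^2)⁻¹ := by
    funext x
    rw [mul_pow, Real.sq_sqrt hc.le, show c * x^2 + c = c * (1 + x^2) by ring, mul_inv]
  rw [this]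
  exact integrable_inv_one_add_sq.const_mul _

lemma aux_int_inv_c {c : ℝ} (hc : 0 < c) :
    ∫ u : ℝ, (u^2 + c)⁻¹ = Real.pi / Real.sqrt c := by
  have hs : (0:ℝ) < Real.sqrt c := Real.sqrt_pos.mpr hc
  have h := MeasureTheory.Measure.integral_comp_mul_left
    (fun u : ℝ => (u^2 + c)⁻¹) (Real.sqrt c)
  have hl : (∫ x : ℝ, ((Real.sqrt c * x)^2 + c)⁻¹) = c⁻¹ * Real.pi := by
    have : (fun x : ℝ => ((Real.sqrt c * x)^2 + c)⁻¹) = fun x : ℝ => c⁻¹ * (1 + x^2)⁻¹ := by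
      funext x
      rw [mul_pow, Real.sq_sqrt hc.le, show c * x^2 + c = c * (1 + x^2) by ring, mul_inv]
    rw [this, integral_const_mul, integral_univ_inv_one_add_sq]
  rw [hl, abs_of_pos (by positivity : (0:ℝ) < (Real.sqrt c)⁻¹), smul_eq_mul] at h
  have : (∫ u : ℝ, (u^2 + c)⁻¹) = Real.sqrt c * (c⁻¹ * Real.pi) := by
    rw [h, ← mul_assoc, mul_inv_cancel₀ hs.ne', one_mul]
  rw [this]
  rw [show Real.sqrt c * (c⁻¹ * Real.pi) = (Real.sqrt c / c) * Real.pi by ring,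
    Real.sqrt_div_self']
  ring



lemma aux_intg_affine {c : ℝ} (hc : 0 < c) {s : ℝ} (hs : s ≠ 0) (d : ℝ) :
    Integrable (fun x : ℝ => ((s*x + d)^2 + c) ^ (-(3:ℝ)/2)) :=
  ((aux_intg_c hc).comp_add_right d).comp_mul_left' hs

lemma aux_int_affine {c : ℝ} (hc : 0 < c) {s : ℝ} (hs : s ≠ 0) (d : ℝ) :
    ∫ x : ℝ, ((s*x + d)^2 + c) ^ (-(3:ℝ)/2) = |s|⁻¹ * (2 / c) := by
  have h := MeasureTheory.Measure.integral_comp_mul_left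
    (fun u : ℝ => ((u + d)^2 + c) ^ (-(3:ℝ)/2)) s
  simp only [smul_eq_mul, abs_inv] at h
  rw [h, MeasureTheory.integral_add_right_eq_self (fun u : ℝ => (u^2 + c) ^ (-(3:ℝ)/2)) d,
    aux_int_c hc]

lemma aux_intg_inv_affine {c : ℝ} (hc : 0 < c) {s : ℝ} (hs : s ≠ 0) (d : ℝ) :
    Integrable (fun x : ℝ => ((s*x + d)^2 + c)⁻¹) :=
  ((aux_intg_inv_c hc).comp_add_right d).comp_mul_left' hs

lemma aux_int_inv_affine {c : ℝ} (hc : 0 < c) {s : ℝ} (hs : s ≠ 0) (d : ℝ) :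
    ∫ x : ℝ, ((s*x + d)^2 + c)⁻¹ = |s|⁻¹ * (Real.pi / Real.sqrt c) := by
  have h := MeasureTheory.Measure.integral_comp_mul_left
    (fun u : ℝ => ((u + d)^2 + c)⁻¹) s
  simp only [smul_eq_mul, abs_inv] at h
  rw [h, MeasureTheory.integral_add_right_eq_self (fun u : ℝ => (u^2 + c)⁻¹) d,
    aux_int_inv_c hc]

lemma key_id (a11 a22 : ℝ) (a12 : ℂ) (ha11 : 0 < a11)
    (hAA : 0 < a11 * a22 - Complex.normSq a12 + a12.im^2) (y1 y2 μ x1 x2 : ℝ) :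
    Qh a11 a22 a12 ((x1:ℂ) + (y1:ℂ)*Complex.I) ((x2:ℂ) + (y2:ℂ)*Complex.I)
      + (a11*a22 - Complex.normSq a12)*μ^2
    = (Real.sqrt a11 * x1 + (a12.re*x2 + a12.im*y2)/Real.sqrt a11)^2
      + (((a11*a22 - Complex.normSq a12 + a12.im^2)/a11)
          * (x2 - a12.im*(a11*y1 + a12.re*y2)/(a11*a22 - Complex.normSq a12 + a12.im^2))^2
      + (((a11*a22 - Complex.normSq a12)/(a11*a22 - Complex.normSq a12 + a12.im^2))
            * QR a11 a22 a12 y1 y2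
         + (a11*a22 - Complex.normSq a12)*μ^2)) := by
  obtain ⟨s, hspos, rfl⟩ : ∃ s : ℝ, 0 < s ∧ s^2 = a11 :=
    ⟨Real.sqrt a11, Real.sqrt_pos.mpr ha11, Real.sq_sqrt ha11.le⟩
  rw [Real.sqrt_sq hspos.le]
  simp only [Qh, QR, Complex.normSq_apply, Complex.add_re, Complex.add_im, Complex.mul_re,
    Complex.mul_im, Complex.I_re, Complex.I_im, Complex.ofReal_re, Complex.ofReal_im,
    Complex.conj_re, Complex.conj_im, mul_zero, zero_mul, mul_one, one_mul, sub_zero,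
    zero_add, add_zero, zero_sub, mul_neg, neg_neg, neg_zero] at *
  have hA0 : s^2*a22 - (a12.re*a12.re + a12.im*a12.im) + a12.im^2 ≠ 0 := ne_of_gt hAA
  have hA0' : s^2*a22 - a12.re^2 ≠ 0 := by
    intro h; apply hA0; linear_combination h
  rw [show s^2*a22 - (a12.re*a12.re + a12.im*a12.im) + a12.im^2 = s^2*a22 - a12.re^2 by ring]
  field_simp
  ring

/-- the fibrewise integral of the Newtonian kernel:
`∫_{ℝ²} (Q(x₁+iy₁, x₂+iy₂) + Aμ²)^{−3/2} dx₁dx₂ = 2π/(√𝔸·ϱ)` whenever `ϱ > 0`,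
where `A = det a`, `𝔸 = A + (Im a₁₂)²` and `ϱ = √((A/𝔸)Qℝ(y) + Aμ²)`. -/
theorem statement12 (a11 a22 : ℝ) (a12 : ℂ) (ha11 : 0 < a11) (ha22 : 0 < a22)
    (hA : 0 < a11 * a22 - Complex.normSq a12) (y1 y2 μ : ℝ)
    (hrho : 0 < Real.sqrt (((a11 * a22 - Complex.normSq a12) /
        (a11 * a22 - Complex.normSq a12 + a12.im ^ 2)) * QR a11 a22 a12 y1 y2
      + (a11 * a22 - Complex.normSq a12) * μ ^ 2)) :
    Integrable (fun x : ℝ × ℝ =>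
      (Qh a11 a22 a12 ((x.1 : ℂ) + (y1 : ℂ) * Complex.I) ((x.2 : ℂ) + (y2 : ℂ) * Complex.I)
        + (a11 * a22 - Complex.normSq a12) * μ ^ 2) ^ (-(3 : ℝ) / 2)) ∧
    (∫ x : ℝ × ℝ,
      (Qh a11 a22 a12 ((x.1 : ℂ) + (y1 : ℂ) * Complex.I) ((x.2 : ℂ) + (y2 : ℂ) * Complex.I)
        + (a11 * a22 - Complex.normSq a12) * μ ^ 2) ^ (-(3 : ℝ) / 2))
      = 2 * Real.pi / (Real.sqrt (a11 * a22 - Complex.normSq a12 + a12.im ^ 2) *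
          Real.sqrt (((a11 * a22 - Complex.normSq a12) /
              (a11 * a22 - Complex.normSq a12 + a12.im ^ 2)) * QR a11 a22 a12 y1 y2
            + (a11 * a22 - Complex.normSq a12) * μ ^ 2)) := by
  have hAA : 0 < a11 * a22 - Complex.normSq a12 + a12.im ^ 2 :=
    add_pos_of_pos_of_nonneg hA (sq_nonneg _)
  have hP : 0 < ((a11 * a22 - Complex.normSq a12) /
        (a11 * a22 - Complex.normSq a12 + a12.im ^ 2)) * QR a11 a22 a12 y1 y2
      + (a11 * a22 - Complex.normSq a12) * μ ^ 2 := Real.sqrt_pos.mp hrho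
  set P : ℝ := ((a11 * a22 - Complex.normSq a12) /
        (a11 * a22 - Complex.normSq a12 + a12.im ^ 2)) * QR a11 a22 a12 y1 y2
      + (a11 * a22 - Complex.normSq a12) * μ ^ 2 with hPdef
  have hs : (0:ℝ) < Real.sqrt a11 := Real.sqrt_pos.mpr ha11
  set s : ℝ := Real.sqrt a11 with hsdef
  have hb : (0:ℝ) < Real.sqrt ((a11 * a22 - Complex.normSq a12 + a12.im ^ 2) / a11) :=
    Real.sqrt_pos.mpr (div_pos hAA ha11)
  set b : ℝ := Real.sqrt ((a11 * a22 - Complex.normSq a12 + a12.im ^ 2) / a11) with hbdef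
  have hb2 : b ^ 2 = (a11 * a22 - Complex.normSq a12 + a12.im ^ 2) / a11 :=
    Real.sq_sqrt (div_pos hAA ha11).le
  set t : ℝ := a12.im * (a11 * y1 + a12.re * y2) /
      (a11 * a22 - Complex.normSq a12 + a12.im ^ 2) with htdef
  set d : ℝ → ℝ := fun x2 => (a12.re * x2 + a12.im * y2) / s with hddef
  set C : ℝ → ℝ := fun x2 => (b * (x2 - t)) ^ 2 + P with hCdef
  have hC : ∀ x2 : ℝ, 0 < C x2 := fun x2 =>
    add_pos_of_nonneg_of_pos (sq_nonneg _) hP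
  have hfun : (fun x : ℝ × ℝ =>
      (Qh a11 a22 a12 ((x.1 : ℂ) + (y1 : ℂ) * Complex.I) ((x.2 : ℂ) + (y2 : ℂ) * Complex.I)
        + (a11 * a22 - Complex.normSq a12) * μ ^ 2) ^ (-(3 : ℝ) / 2))
      = fun x : ℝ × ℝ => ((s * x.1 + d x.2) ^ 2 + C x.2) ^ (-(3 : ℝ) / 2) := by
    funext x
    rw [key_id a11 a22 a12 ha11 hAA y1 y2 μ x.1 x.2]
    congr 1
    have hbb : ∀ z : ℝ, (b * z)^2 = ((a11*a22 - Complex.normSq a12 + a12.im^2)/a11) * z^2 := by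
      intro z; rw [mul_pow, hb2]
    simp only [hCdef, hddef, hbb]
    try ring
  set g : ℝ × ℝ → ℝ := fun x : ℝ × ℝ => ((s * x.1 + d x.2) ^ 2 + C x.2) ^ (-(3 : ℝ) / 2)
    with hgdef
  have hgpos : ∀ x : ℝ × ℝ, 0 ≤ (s * x.1 + d x.2) ^ 2 + C x.2 := fun x =>
    add_nonneg (sq_nonneg _) (hC _).le
  have hcont : Continuous g := by
    apply Continuous.rpow_const
    · fun_prop
    · intro x
      exact Or.inl (ne_of_gt (add_pos_of_nonneg_of_pos (sq_nonneg _) (hC x.2)))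
  have hnorm : ∀ x : ℝ × ℝ, ‖g x‖ = g x := fun x =>
    Real.norm_of_nonneg (Real.rpow_nonneg (hgpos x) _)
  have hsec : ∀ x2 : ℝ, Integrable (fun x1 : ℝ => g (x1, x2)) := fun x2 =>
    aux_intg_affine (hC x2) hs.ne' (d x2)
  have houter : (fun x2 : ℝ => ∫ x1 : ℝ, ‖g (x1, x2)‖)
      = fun x2 : ℝ => |s|⁻¹ * (2 / C x2) := by
    funext x2
    simp only [hnorm]
    exact aux_int_affine (hC x2) hs.ne' (d x2)
  have houterInt : Integrable (fun x2 : ℝ => |s|⁻¹ * (2 / C x2)) := by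
    have : (fun x2 : ℝ => |s|⁻¹ * (2 / C x2))
        = fun x2 : ℝ => (|s|⁻¹ * 2) * ((b * x2 + -(b * t)) ^ 2 + P)⁻¹ := by
      funext x2
      have : b * x2 + -(b * t) = b * (x2 - t) := by ring
      rw [this, hCdef]
      ring
    rw [this]
    exact (aux_intg_inv_affine hP hb.ne' _).const_mul _
  have hmeas : AEStronglyMeasurable g (volume.prod volume) :=
    hcont.aestronglyMeasurable
  have hg : Integrable g (volume.prod volume) := by
    refine (integrable_prod_iff' hmeas).mpr ⟨Filter.Eventually.of_forall hsec, ?_⟩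
    rw [houter]; exact houterInt
  constructor
  · rw [hfun, Measure.volume_eq_prod]; exact hg
  · rw [hfun]
    have h1 : (∫ x : ℝ × ℝ, g x) = ∫ x2 : ℝ, ∫ x1 : ℝ, g (x1, x2) := by
      rw [Measure.volume_eq_prod]; exact integral_prod_symm g hg
    have h2 : (∫ x2 : ℝ, ∫ x1 : ℝ, g (x1, x2)) = ∫ x2 : ℝ, |s|⁻¹ * (2 / C x2) :=
      integral_congr_ae (Filter.Eventually.of_forall fun x2 =>
        aux_int_affine (hC x2) hs.ne' (d x2))
    have h3 : (∫ x2 : ℝ, |s|⁻¹ * (2 / C x2))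
        = |s|⁻¹ * (2 * (|b|⁻¹ * (Real.pi / Real.sqrt P))) := by
      have hrw : (fun x2 : ℝ => |s|⁻¹ * (2 / C x2))
          = fun x2 : ℝ => |s|⁻¹ * (2 * ((b * x2 + -(b * t)) ^ 2 + P)⁻¹) := by
        funext x2
        have : b * x2 + -(b * t) = b * (x2 - t) := by ring
        rw [this, hCdef]
        ring
      rw [hrw, integral_const_mul, integral_const_mul, aux_int_inv_affine hP hb.ne']
    rw [h1, h2, h3]
    have hsb : s * b = Real.sqrt (a11 * a22 - Complex.normSq a12 + a12.im ^ 2) := by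
      rw [hsdef, hbdef, ← Real.sqrt_mul ha11.le,
        mul_div_cancel₀ _ ha11.ne']
    rw [← hsb, abs_of_pos hs, abs_of_pos hb]
    have hsqP : (0:ℝ) < Real.sqrt P := hrho
    field_simp
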